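/- Let W and W' be 2×2 real matrices with columns (v^r, v^l) and (w^r, w^l) respectively, and let A be a 2×2 real matrix with det(A) > 0 such that W' = W·A. Assume all relevant denominators are nonzero. Then Im(w^l)/Im(w^r) = (R·Aᵀ·R) * (Im(v^l)/Im(v^r)), where R = [[0,1],[1,0]] and * denotes the Möbius action. -/

import Mathlib

/-- Let `W` and `W' = W·A` be `2×2` real matrices with columns
`(v^r, v^l)` and `(w^r, w^l)` respectively (so `Im v^r = W 1 0`, `Im v^l = W 1 1`,
`Im w^r = W' 1 0`, `Im w^l = W' 1 1`), and let `det A > 0`. With `R = [[0,1],[1,0]]`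
and `M = R·A.transpose·R`, assuming the relevant denominators are nonzero,
`Im(w^l)/Im(w^r) = (R·A.transpose·R) * (Im(v^l)/Im(v^r))` for the Möbius action. -/
theorem imaginary_part_ratio_mobius (W W' A : Matrix (Fin 2) (Fin 2) ℝ)
    (hdet : 0 < A.det) (hWA : W' = W * A)
    (h1 : W 1 0 ≠ 0) (h2 : W' 1 0 ≠ 0)
    (M : Matrix (Fin 2) (Fin 2) ℝ)
    (hM : M = !![(0 : ℝ), 1; 1, 0] * A.transpose * !![(0 : ℝ), 1; 1, 0])
    (h3 : M 1 0 * (W 1 1 / W 1 0) + M 1 1 ≠ 0) :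
    W' 1 1 / W' 1 0 =
      (M 0 0 * (W 1 1 / W 1 0) + M 0 1) / (M 1 0 * (W 1 1 / W 1 0) + M 1 1) := by
  subst hWA hM
  simp only [Matrix.mul_apply, Fin.sum_univ_two, Matrix.transpose_apply,
    Matrix.cons_val_zero, Matrix.cons_val_one, Matrix.head_cons, Matrix.head_fin_const,
    Matrix.cons_val', Matrix.empty_val', Matrix.cons_val_fin_one, Matrix.of_apply] at *
  field_simp at h3 ⊢
  ring_nf
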